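/- Let M, K be symmetric positive definite n×n matrices, σ ≥ 0, Δt > 0, and suppose M - (Δt²/4)(K + σ² M) is positive definite. Then every solution (P^n) of M((P^{n+1} - 2P^n + P^{n-1})/Δt² + σ (P^{n+1} - P^{n-1})/Δt + σ² P^n) + K P^n = 0 is bounded: there exists C ≥ 0 depending only on P⁰, P¹, M, K, σ, Δt such that ‖P^n‖ ≤ C for all n ≥ 0. -/

import Mathlib

open Matrix

private lemma symm_dot {d : ℕ} {B : Matrix (Fin d) (Fin d) ℝ} (hB : B.IsHermitian)
    (x y : Fin d → ℝ) : x ⬝ᵥ B.mulVec y = y ⬝ᵥ B.mulVec x := by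
  have h : Bᵀ = B := by rw [← conjTranspose_eq_transpose_of_trivial, hB.eq]
  rw [dotProduct_mulVec, ← mulVec_transpose, dotProduct_comm, h]

private lemma pd_pos {d : ℕ} {B : Matrix (Fin d) (Fin d) ℝ} (hB : B.PosDef)
    {x : Fin d → ℝ} (hx : x ≠ 0) : 0 < x ⬝ᵥ B.mulVec x := by
  have := hB.dotProduct_mulVec_pos hx; simpa using this

private lemma psd_nonneg {d : ℕ} {B : Matrix (Fin d) (Fin d) ℝ} (hB : B.PosSemidef)
    (x : Fin d → ℝ) : 0 ≤ x ⬝ᵥ B.mulVec x := by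
  have := hB.dotProduct_mulVec_nonneg x; simpa using this

private lemma quad_smul {d : ℕ} (B : Matrix (Fin d) (Fin d) ℝ) (t : ℝ) (x : Fin d → ℝ) :
    (t • x) ⬝ᵥ B.mulVec (t • x) = t ^ 2 * (x ⬝ᵥ B.mulVec x) := by
  simp [mulVec_smul, dotProduct_smul, smul_dotProduct, smul_smul]
  ring

private lemma posdef_coercive {d : ℕ} {B : Matrix (Fin d) (Fin d) ℝ} (hB : B.PosDef) :
    ∃ c : ℝ, 0 < c ∧ ∀ x : Fin d → ℝ, c * ‖x‖ ^ 2 ≤ x ⬝ᵥ B.mulVec x := by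
  have hcont : Continuous (fun x : Fin d → ℝ => x ⬝ᵥ B.mulVec x) := by
    simp only [dotProduct, Matrix.mulVec]
    exact continuous_finset_sum _ fun i _ => (continuous_apply i).mul
      (continuous_finset_sum _ fun j _ => continuous_const.mul (continuous_apply j))
  rcases (Metric.sphere (0 : Fin d → ℝ) 1).eq_empty_or_nonempty with hS | hS
  · refine ⟨1, one_pos, fun x => ?_⟩
    rcases eq_or_ne x 0 with rfl | hx
    · simp
    · exfalso
      have hxn : ‖x‖ ≠ 0 := norm_ne_zero_iff.mpr hx
      have : (‖x‖⁻¹ • x) ∈ Metric.sphere (0 : Fin d → ℝ) 1 := by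
        simp [norm_smul, abs_of_nonneg (inv_nonneg.mpr (norm_nonneg x)),
          inv_mul_cancel₀ hxn]
      rw [hS] at this; exact this
  · obtain ⟨x₀, hx₀S, hmin⟩ := (isCompact_sphere (0 : Fin d → ℝ) 1).exists_isMinOn hS
      hcont.continuousOn
    have hx₀norm : ‖x₀‖ = 1 := by simpa using hx₀S
    have hx₀ : x₀ ≠ 0 := by
      intro h; rw [h] at hx₀norm; simp at hx₀norm
    refine ⟨x₀ ⬝ᵥ B.mulVec x₀, pd_pos hB hx₀, fun x => ?_⟩
    rcases eq_or_ne x 0 with rfl | hx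
    · simp
    · have hxn : ‖x‖ ≠ 0 := norm_ne_zero_iff.mpr hx
      have hu : (‖x‖⁻¹ • x) ∈ Metric.sphere (0 : Fin d → ℝ) 1 := by
        simp [norm_smul, abs_of_nonneg (inv_nonneg.mpr (norm_nonneg x)),
          inv_mul_cancel₀ hxn]
      have h1 := hmin hu
      have h2 : (‖x‖⁻¹ • x) ⬝ᵥ B.mulVec (‖x‖⁻¹ • x) = (‖x‖⁻¹) ^ 2 * (x ⬝ᵥ B.mulVec x) :=
        quad_smul B _ x
      have h3 : x₀ ⬝ᵥ B.mulVec x₀ ≤ (‖x‖⁻¹) ^ 2 * (x ⬝ᵥ B.mulVec x) := by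
        rw [← h2]; exact h1
      have hn2 : (0:ℝ) < ‖x‖ ^ 2 := by positivity
      have h4 := mul_le_mul_of_nonneg_left h3 (le_of_lt hn2)
      calc (x₀ ⬝ᵥ B.mulVec x₀) * ‖x‖ ^ 2 ≤ ‖x‖ ^ 2 * ((‖x‖⁻¹) ^ 2 * (x ⬝ᵥ B.mulVec x)) := by
              linarith [h4]
        _ = x ⬝ᵥ B.mulVec x := by field_simp

private lemma schemeA_step {d : ℕ} (M K : Matrix (Fin d) (Fin d) ℝ)
    (hM : M.IsHermitian) (hK : K.IsHermitian)
    (σ Δt : ℝ) (hΔt : Δt ≠ 0) (a b c : Fin d → ℝ)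
    (h : M.mulVec ((Δt ^ 2)⁻¹ • (a - (2 : ℝ) • b + c)
          + σ • (Δt⁻¹ • (a - c)) + σ ^ 2 • b) + K.mulVec b = 0) :
    (1/2) * ((Δt^2)⁻¹ * ((b - c) ⬝ᵥ M.mulVec (b - c)) + c ⬝ᵥ (K + σ^2 • M).mulVec b)
    - (1/2) * ((Δt^2)⁻¹ * ((a - b) ⬝ᵥ M.mulVec (a - b)) + b ⬝ᵥ (K + σ^2 • M).mulVec a)
    = (σ / (2*Δt)) * ((a - c) ⬝ᵥ M.mulVec (a - c)) := by
  have h0 := congrArg (fun w => (a - c) ⬝ᵥ w) h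
  simp only [dotProduct_add, dotProduct_sub, sub_dotProduct, add_dotProduct,
    Matrix.mulVec_add, Matrix.mulVec_sub, Matrix.mulVec_smul, Matrix.add_mulVec,
    Matrix.sub_mulVec, Matrix.smul_mulVec, dotProduct_smul, smul_dotProduct,
    smul_eq_mul, dotProduct_zero] at h0 ⊢
  rw [symm_dot hM c a, symm_dot hM c b, symm_dot hK c b, symm_dot hM b a,
    symm_dot hK b a] at *
  field_simp at h0 ⊢
  linarith [h0]

private lemma schemeA_decomp {d : ℕ} (M A : Matrix (Fin d) (Fin d) ℝ)
    (hM : M.IsHermitian) (hA : A.IsHermitian)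
    (Δt : ℝ) (hΔt : Δt ≠ 0) (u v : Fin d → ℝ) :
    (1/2) * ((Δt^2)⁻¹ * ((v - u) ⬝ᵥ M.mulVec (v - u)) + u ⬝ᵥ A.mulVec v)
    = (1/2) * ((Δt⁻¹ • (v - u)) ⬝ᵥ (M - (Δt^2/4) • A).mulVec (Δt⁻¹ • (v - u))
        + ((1/2 : ℝ) • (u + v)) ⬝ᵥ A.mulVec ((1/2 : ℝ) • (u + v))) := by
  simp only [dotProduct_add, dotProduct_sub, sub_dotProduct, add_dotProduct,
    Matrix.mulVec_add, Matrix.mulVec_sub, Matrix.mulVec_smul, Matrix.add_mulVec,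
    Matrix.sub_mulVec, Matrix.smul_mulVec, dotProduct_smul, smul_dotProduct,
    smul_eq_mul]
  rw [symm_dot hM v u, symm_dot hA v u]
  field_simp
  ring

/-- Stability of scheme A under its modified CFL condition: if
`M - (Δt²/4)(K + σ²M)` is positive definite, then every solution of the damped
leapfrog recurrence is bounded. -/
theorem schemeA_stability
    {d : ℕ} (M K : Matrix (Fin d) (Fin d) ℝ)
    (hM : M.PosDef) (hK : K.PosDef) (σ Δt : ℝ) (hσ : 0 ≤ σ) (hΔt : 0 < Δt)
    (hCFL : (M - (Δt ^ 2 / 4) • (K + σ ^ 2 • M)).PosDef)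
    (P : ℕ → Fin d → ℝ)
    (hrec : ∀ n : ℕ, 1 ≤ n →
      M.mulVec ((Δt ^ 2)⁻¹ • (P (n + 1) - (2 : ℝ) • P n + P (n - 1))
          + σ • (Δt⁻¹ • (P (n + 1) - P (n - 1)))
          + σ ^ 2 • P n)
        + K.mulVec (P n) = 0) :
    ∃ C : ℝ, 0 ≤ C ∧ ∀ n : ℕ, ‖P n‖ ≤ C := by
  have hΔt' : Δt ≠ 0 := ne_of_gt hΔt
  set A : Matrix (Fin d) (Fin d) ℝ := K + σ ^ 2 • M with hAdef
  have hMσ : (σ ^ 2 • M).PosSemidef := by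
    rw [posSemidef_iff_dotProduct_mulVec]
    constructor
    · simpa [Matrix.IsHermitian, conjTranspose_smul] using congrArg (σ ^ 2 • ·) hM.1.eq
    · intro x
      have h := hM.posSemidef.dotProduct_mulVec_nonneg x
      simp only [smul_mulVec, dotProduct_smul] at *
      positivity
  have hApd : A.PosDef := hK.add_posSemidef hMσ
  have hBpd : (M - (Δt ^ 2 / 4) • A).PosDef := hCFL
  -- energy
  set E : ℕ → ℝ := fun n =>
    (1/2) * ((Δt^2)⁻¹ * ((P (n+1) - P n) ⬝ᵥ M.mulVec (P (n+1) - P n))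
      + P n ⬝ᵥ A.mulVec (P (n+1))) with hEdef
  -- the centered difference and average
  set D : ℕ → Fin d → ℝ := fun n => Δt⁻¹ • (P (n+1) - P n) with hDdef
  set I : ℕ → Fin d → ℝ := fun n => (1/2 : ℝ) • (P n + P (n+1)) with hIdef
  have hdecomp : ∀ n : ℕ,
      E n = (1/2) * ((D n) ⬝ᵥ (M - (Δt^2/4) • A).mulVec (D n)
        + (I n) ⬝ᵥ A.mulVec (I n)) := by
    intro n
    simpa [hEdef, hDdef, hIdef] using
      schemeA_decomp M A hM.1 hApd.1 Δt hΔt' (P n) (P (n+1))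
  -- energy is nonincreasing
  have hstep : ∀ n : ℕ, E (n+1) ≤ E n := by
    intro n
    have hr := hrec (n+1) (Nat.le_add_left 1 n)
    simp only [Nat.add_sub_cancel] at hr
    have hs := schemeA_step M K hM.1 hK.1 σ Δt hΔt' (P (n+2)) (P (n+1)) (P n) hr
    have hq : 0 ≤ (P (n+2) - P n) ⬝ᵥ M.mulVec (P (n+2) - P n) :=
      psd_nonneg hM.posSemidef _
    have hσΔ : 0 ≤ σ / (2*Δt) := by positivity
    have : 0 ≤ (σ / (2*Δt)) * ((P (n+2) - P n) ⬝ᵥ M.mulVec (P (n+2) - P n)) :=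
      mul_nonneg hσΔ hq
    have hEn : E n = (1/2) * ((Δt^2)⁻¹ * ((P (n+1) - P n) ⬝ᵥ M.mulVec (P (n+1) - P n))
        + P n ⬝ᵥ A.mulVec (P (n+1))) := rfl
    have hEn1 : E (n+1) = (1/2) * ((Δt^2)⁻¹ *
        ((P (n+2) - P (n+1)) ⬝ᵥ M.mulVec (P (n+2) - P (n+1)))
        + P (n+1) ⬝ᵥ A.mulVec (P (n+2))) := rfl
    rw [hEn, hEn1]
    rw [hAdef]
    linarith [hs, this]
  have hmono : ∀ n : ℕ, E n ≤ E 0 := by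
    intro n
    induction n with
    | zero => exact le_refl _
    | succ k ih => exact le_trans (hstep k) ih
  -- coercivity constants
  obtain ⟨c₁, hc₁, hco₁⟩ := posdef_coercive hBpd
  obtain ⟨c₂, hc₂, hco₂⟩ := posdef_coercive hApd
  -- bounds on D and I
  have hbound : ∀ n : ℕ, c₁ * ‖D n‖^2 + c₂ * ‖I n‖^2 ≤ 2 * E 0 := by
    intro n
    have h1 := hco₁ (D n)
    have h2 := hco₂ (I n)
    have h3 := hdecomp n
    have h4 := hmono n
    linarith
  have hE0 : 0 ≤ E 0 := by
    have h1 := hco₁ (D 0)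
    have h2 := hco₂ (I 0)
    have h3 := hdecomp 0
    nlinarith [norm_nonneg (D 0), norm_nonneg (I 0), sq_nonneg ‖D 0‖, sq_nonneg ‖I 0‖]
  set C : ℝ := Real.sqrt (2 * E 0 / c₂) + (Δt/2) * Real.sqrt (2 * E 0 / c₁) with hCdef
  refine ⟨C, by positivity, fun n => ?_⟩
  -- bound ‖I n‖ and ‖D n‖
  have hDn : ‖D n‖ ≤ Real.sqrt (2 * E 0 / c₁) := by
    have h1 : ‖D n‖^2 ≤ 2 * E 0 / c₁ := by
      rw [le_div_iff₀ hc₁]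
      nlinarith [hbound n, norm_nonneg (I n), sq_nonneg ‖I n‖, mul_nonneg hc₂.le (sq_nonneg ‖I n‖)]
    calc ‖D n‖ = Real.sqrt (‖D n‖^2) := (Real.sqrt_sq (norm_nonneg _)).symm
      _ ≤ Real.sqrt (2 * E 0 / c₁) := Real.sqrt_le_sqrt h1
  have hIn : ‖I n‖ ≤ Real.sqrt (2 * E 0 / c₂) := by
    have h1 : ‖I n‖^2 ≤ 2 * E 0 / c₂ := by
      rw [le_div_iff₀ hc₂]
      nlinarith [hbound n, mul_nonneg hc₁.le (sq_nonneg ‖D n‖)]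
    calc ‖I n‖ = Real.sqrt (‖I n‖^2) := (Real.sqrt_sq (norm_nonneg _)).symm
      _ ≤ Real.sqrt (2 * E 0 / c₂) := Real.sqrt_le_sqrt h1
  -- P n = I n - (Δt/2) • D n
  have hPn : P n = I n - (Δt/2) • D n := by
    funext i
    simp only [hIdef, hDdef, Pi.sub_apply, Pi.smul_apply, Pi.add_apply, smul_eq_mul]
    field_simp
    ring
  calc ‖P n‖ = ‖I n - (Δt/2) • D n‖ := by rw [hPn]
    _ ≤ ‖I n‖ + ‖(Δt/2) • D n‖ := norm_sub_le _ _
    _ = ‖I n‖ + (Δt/2) * ‖D n‖ := by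
        rw [norm_smul (Δt/2) (D n), Real.norm_eq_abs, abs_of_pos (by positivity : (0:ℝ) < Δt/2)]
    _ ≤ C := by
        rw [hCdef]
        have := mul_le_mul_of_nonneg_left hDn (by positivity : (0:ℝ) ≤ Δt/2)
        linarith
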